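/- arXiv:0809.3821 — 2 statements merged into one kernel-verified Lean document; each statement's English description precedes it below -/
import Mathlib

section
/- Let θ, x, z solve x' = cos θ, z' = sin θ, z > 0, with θ'(s) = ((m−1)cos θ(s) + n)/z(s), n ≥ 0, n + m − 1 > 0, m < n + 1, θ(0) = 0. If there exists s₂ > 0 with θ(s₂) = π, then with T = 2s₂ the solution satisfies the quasi-periodicity relations x(s+T) = x(s) + x(T), z(s+T) = z(s), θ(s+T) = θ(s) + 2π for all s, i.e. the generating curve is invariant under the horizontal translation by (x(T), 0). -/
open Real

private lemma lipSin : LipschitzWith 1 Real.sin := by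
  apply lipschitzWith_of_nnnorm_deriv_le Real.differentiable_sin
  intro x
  rw [Real.deriv_sin]
  exact NNReal.coe_le_coe.mp (by simpa using Real.abs_cos_le_one x)

private lemma lipCos : LipschitzWith 1 Real.cos := by
  apply lipschitzWith_of_nnnorm_deriv_le Real.differentiable_cos
  intro x
  rw [Real.deriv_cos]
  exact NNReal.coe_le_coe.mp (by simpa using Real.abs_sin_le_one x)

/-- The autonomous vector field of the (θ, z) subsystem. -/
noncomputable def Vfield (m n : ℝ) : ℝ × ℝ → ℝ × ℝ :=
  fun p => (((m - 1) * Real.cos p.1 + n) / p.2, Real.sin p.1)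

private lemma Vfield_lip (m n ε : ℝ) (hε : 0 < ε) :
    LipschitzOnWith
      (Real.toNNReal (|m - 1| / ε + (|m - 1| + |n|) / (ε * ε) + 1))
      (Vfield m n) {p : ℝ × ℝ | ε ≤ p.2} := by
  set C : ℝ := |m - 1| / ε + (|m - 1| + |n|) / (ε * ε) + 1 with hCdef
  have hX : 0 ≤ |m - 1| / ε := div_nonneg (abs_nonneg _) hε.le
  have hY : 0 ≤ (|m - 1| + |n|) / (ε * ε) :=
    div_nonneg (by positivity) (by positivity)
  have hC : 0 ≤ C := by rw [hCdef]; linarith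
  have hC1 : 1 ≤ C := by rw [hCdef]; linarith
  rw [lipschitzOnWith_iff_dist_le_mul]
  intro p hp q hq
  simp only [Set.mem_setOf_eq] at hp hq
  have hzp : 0 < p.2 := lt_of_lt_of_le hε hp
  have hzq : 0 < q.2 := lt_of_lt_of_le hε hq
  set D := dist p q with hDdef
  have hD0 : 0 ≤ D := dist_nonneg
  have hD1 : |p.1 - q.1| ≤ D := by
    rw [← Real.dist_eq, hDdef, Prod.dist_eq]; exact le_max_left _ _
  have hD2 : |p.2 - q.2| ≤ D := by
    rw [← Real.dist_eq, hDdef, Prod.dist_eq]; exact le_max_right _ _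
  rw [Real.coe_toNNReal _ hC, Prod.dist_eq]
  apply max_le
  · -- first component
    rw [Real.dist_eq]
    show |((m - 1) * Real.cos p.1 + n) / p.2 -
        ((m - 1) * Real.cos q.1 + n) / q.2| ≤ C * D
    set A := (m - 1) * Real.cos p.1 + n with hA
    set B := (m - 1) * Real.cos q.1 + n with hB
    have hAB : |A - B| ≤ |m - 1| * D := by
      have e : A - B = (m - 1) * (Real.cos p.1 - Real.cos q.1) := by
        rw [hA, hB]; ring
      rw [e, abs_mul]
      have hcos : |Real.cos p.1 - Real.cos q.1| ≤ |p.1 - q.1| := by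
        have := lipCos.dist_le_mul p.1 q.1
        simpa [Real.dist_eq] using this
      exact mul_le_mul_of_nonneg_left (le_trans hcos hD1) (abs_nonneg _)
    have hBabs : |B| ≤ |m - 1| + |n| := by
      calc |B| ≤ |(m - 1) * Real.cos q.1| + |n| := abs_add_le _ _
        _ = |m - 1| * |Real.cos q.1| + |n| := by rw [abs_mul]
        _ ≤ |m - 1| * 1 + |n| :=
            add_le_add_left
              (mul_le_mul_of_nonneg_left (Real.abs_cos_le_one _) (abs_nonneg _)) _
        _ = |m - 1| + |n| := by ring
    have e2 : A / p.2 - B / q.2 = ((A - B) * q.2 + B * (q.2 - p.2)) / (p.2 * q.2) := by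
      field_simp
      ring
    rw [e2, abs_div, abs_of_pos (mul_pos hzp hzq), div_le_iff₀ (mul_pos hzp hzq)]
    have hnum : |(A - B) * q.2 + B * (q.2 - p.2)| ≤
        |m - 1| * D * q.2 + (|m - 1| + |n|) * D := by
      calc |(A - B) * q.2 + B * (q.2 - p.2)|
          ≤ |(A - B) * q.2| + |B * (q.2 - p.2)| := abs_add_le _ _
        _ = |A - B| * q.2 + |B| * |q.2 - p.2| := by
            rw [abs_mul, abs_mul, abs_of_pos hzq]
        _ ≤ (|m - 1| * D) * q.2 + (|m - 1| + |n|) * D := by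
            have h1 := mul_le_mul_of_nonneg_right hAB hzq.le
            have h2 : |B| * |q.2 - p.2| ≤ (|m - 1| + |n|) * D :=
              mul_le_mul hBabs (by rwa [abs_sub_comm]) (abs_nonneg _) (by positivity)
            linarith
        _ = |m - 1| * D * q.2 + (|m - 1| + |n|) * D := by ring
    refine le_trans hnum ?_
    have f1 : |m - 1| ≤ |m - 1| / ε * p.2 := by
      have e : |m - 1| / ε * ε = |m - 1| := div_mul_cancel₀ _ hε.ne'
      calc |m - 1| = |m - 1| / ε * ε := e.symm
        _ ≤ |m - 1| / ε * p.2 := mul_le_mul_of_nonneg_left hp hX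
    have f2 : |m - 1| + |n| ≤ (|m - 1| + |n|) / (ε * ε) * (p.2 * q.2) := by
      have e : (|m - 1| + |n|) / (ε * ε) * (ε * ε) = |m - 1| + |n| :=
        div_mul_cancel₀ _ (by positivity)
      have hεε : ε * ε ≤ p.2 * q.2 := mul_le_mul hp hq hε.le hzp.le
      calc |m - 1| + |n| = (|m - 1| + |n|) / (ε * ε) * (ε * ε) := e.symm
        _ ≤ (|m - 1| + |n|) / (ε * ε) * (p.2 * q.2) :=
            mul_le_mul_of_nonneg_left hεε hY
    have g1 : |m - 1| * D * q.2 ≤ |m - 1| / ε * D * (p.2 * q.2) := by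
      have := mul_le_mul_of_nonneg_right f1 (mul_nonneg hD0 hzq.le)
      nlinarith
    have g2 : (|m - 1| + |n|) * D ≤ (|m - 1| + |n|) / (ε * ε) * D * (p.2 * q.2) := by
      have := mul_le_mul_of_nonneg_right f2 hD0
      nlinarith
    have g3 : 0 ≤ 1 * D * (p.2 * q.2) := by positivity
    calc |m - 1| * D * q.2 + (|m - 1| + |n|) * D
        ≤ |m - 1| / ε * D * (p.2 * q.2) +
          (|m - 1| + |n|) / (ε * ε) * D * (p.2 * q.2) + 1 * D * (p.2 * q.2) := by
          linarith
      _ = C * D * (p.2 * q.2) := by rw [hCdef]; ring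
  · -- second component
    have hsin : dist (Real.sin p.1) (Real.sin q.1) ≤ dist p.1 q.1 := by
      simpa using lipSin.dist_le_mul p.1 q.1
    calc dist (Vfield m n p).2 (Vfield m n q).2 = dist (Real.sin p.1) (Real.sin q.1) := rfl
      _ ≤ dist p.1 q.1 := hsin
      _ ≤ D := by rw [hDdef, Prod.dist_eq]; exact le_max_left _ _
      _ ≤ C * D := by nlinarith

/-- Uniqueness for the autonomous (θ, z) system, given positivity of z. -/
private lemma ode_uniq (m n : ℝ) (f g : ℝ → ℝ × ℝ)
    (hf : ∀ t, HasDerivAt f (Vfield m n (f t)) t)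
    (hg : ∀ t, HasDerivAt g (Vfield m n (g t)) t)
    (hfpos : ∀ t, 0 < (f t).2) (hgpos : ∀ t, 0 < (g t).2)
    (t₀ : ℝ) (heq : f t₀ = g t₀) : ∀ t, f t = g t := by
  intro t
  set a : ℝ := min t t₀ - 1 with ha
  set b : ℝ := max t t₀ + 1 with hb
  have ht₀ : t₀ ∈ Set.Ioo a b :=
    ⟨by simp only [ha]; have := min_le_right t t₀; linarith,
     by simp only [hb]; have := le_max_right t t₀; linarith⟩
  have htmem : t ∈ Set.Icc a b :=
    ⟨by simp only [ha]; have := min_le_left t t₀; linarith,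
     by simp only [hb]; have := le_max_left t t₀; linarith⟩
  have hfc : Continuous f := by
    rw [continuous_iff_continuousAt]; exact fun s => (hf s).continuousAt
  have hgc : Continuous g := by
    rw [continuous_iff_continuousAt]; exact fun s => (hg s).continuousAt
  have hcont : Continuous fun s => min (f s).2 (g s).2 :=
    (continuous_snd.comp hfc).min (continuous_snd.comp hgc)
  obtain ⟨u, hu, hmin'⟩ := (isCompact_Icc : IsCompact (Set.Icc a b)).exists_isMinOn
    ⟨t, htmem⟩ hcont.continuousOn
  have hmin : ∀ y ∈ Set.Icc a b, min ((f u).2) ((g u).2) ≤ min ((f y).2) ((g y).2) :=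
    fun y hy => hmin' hy
  set ε : ℝ := min ((f u).2) ((g u).2) with hεdef
  have hε : 0 < ε := lt_min (hfpos u) (hgpos u)
  have key := ODE_solution_unique_of_mem_Icc
    (v := fun _ p => Vfield m n p) (s := fun _ => {p : ℝ × ℝ | ε ≤ p.2})
    (fun _ _ => Vfield_lip m n ε hε) ht₀
    hfc.continuousOn (fun s _ => hf s)
    (fun s hs => le_trans (hmin s (Set.Ioo_subset_Icc_self hs)) (min_le_left _ _))
    hgc.continuousOn (fun s _ => hg s)
    (fun s hs => le_trans (hmin s (Set.Ioo_subset_Icc_self hs)) (min_le_right _ _))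
    heq
  exact key htmem

/-- Case `n + m - 1 > 0`, `m < n + 1`: if `θ(s₂) = π` for some `s₂ > 0`, then
with `T = 2 s₂` the generating curve is quasi-periodic:
`x(s+T) = x(s) + x(T)`, `z(s+T) = z(s)`, `θ(s+T) = θ(s) + 2π`, i.e. it is
invariant under the horizontal translation by `(x(T), 0)`. -/
theorem stmt18 (m n : ℝ) (θ x z θd : ℝ → ℝ)
    (hx : ∀ s, HasDerivAt x (Real.cos (θ s)) s)
    (hz : ∀ s, HasDerivAt z (Real.sin (θ s)) s)
    (hθ : ∀ s, HasDerivAt θ (θd s) s)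
    (hzpos : ∀ s, 0 < z s)
    (hode : ∀ s, θd s = ((m - 1) * Real.cos (θ s) + n) / z s)
    (hn : 0 ≤ n) (hmn : 0 < n + m - 1) (hm : m < n + 1)
    (hθ0 : θ 0 = 0) (hx0 : x 0 = 0)
    (s₂ : ℝ) (hs₂ : 0 < s₂) (hθs₂ : θ s₂ = π) :
    ∀ s, x (s + 2 * s₂) = x s + x (2 * s₂) ∧
      z (s + 2 * s₂) = z s ∧
      θ (s + 2 * s₂) = θ s + 2 * π := by
  -- the pair solution
  set f : ℝ → ℝ × ℝ := fun s => (θ s, z s) with hfdef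
  have hf : ∀ t, HasDerivAt f (Vfield m n (f t)) t := by
    intro t
    have := (hθ t).prodMk (hz t)
    have e : Vfield m n (f t) = (θd t, Real.sin (θ t)) := by
      simp only [Vfield, hfdef, hode t]
    rw [e]
    exact this
  -- reflection at 0
  set g₁ : ℝ → ℝ × ℝ := fun s => (-θ (-s), z (-s)) with hg₁def
  have hg₁ : ∀ t, HasDerivAt g₁ (Vfield m n (g₁ t)) t := by
    intro t
    have hneg : HasDerivAt (fun s : ℝ => -s) (-1 : ℝ) t := (hasDerivAt_id t).neg
    have h1 : HasDerivAt (fun s : ℝ => θ (-s)) (θd (-t) * (-1)) t :=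
      (hθ (-t)).comp t hneg
    have h2 : HasDerivAt (fun s : ℝ => z (-s)) (Real.sin (θ (-t)) * (-1)) t :=
      (hz (-t)).comp t hneg
    have := (h1.neg).prodMk h2
    have e : Vfield m n (g₁ t) = (-(θd (-t) * -1), Real.sin (θ (-t)) * -1) := by
      simp only [Vfield, hg₁def, Real.cos_neg, Real.sin_neg, hode (-t), Prod.mk.injEq]
      constructor <;> ring
    rw [e]
    exact this
  have hsym0 : ∀ s, f s = g₁ s := by
    apply ode_uniq m n f g₁ hf hg₁ (fun t => hzpos t) (fun t => hzpos (-t)) 0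
    simp only [hfdef, hg₁def, neg_zero, hθ0, neg_zero]
  -- reflection at s₂
  set g₂ : ℝ → ℝ × ℝ := fun s => (2 * π - θ (2 * s₂ - s), z (2 * s₂ - s)) with hg₂def
  have hg₂ : ∀ t, HasDerivAt g₂ (Vfield m n (g₂ t)) t := by
    intro t
    have hneg : HasDerivAt (fun s : ℝ => 2 * s₂ - s) (-1 : ℝ) t := by
      simpa using (hasDerivAt_id t).const_sub (2 * s₂)
    have h1 : HasDerivAt (fun s : ℝ => θ (2 * s₂ - s)) (θd (2 * s₂ - t) * (-1)) t :=
      (hθ (2 * s₂ - t)).comp t hneg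
    have h2 : HasDerivAt (fun s : ℝ => z (2 * s₂ - s)) (Real.sin (θ (2 * s₂ - t)) * (-1)) t :=
      (hz (2 * s₂ - t)).comp t hneg
    have := (h1.const_sub (2 * π)).prodMk h2
    have e : Vfield m n (g₂ t) =
        (-(θd (2 * s₂ - t) * -1), Real.sin (θ (2 * s₂ - t)) * -1) := by
      simp only [Vfield, hg₂def, hode (2 * s₂ - t), Prod.mk.injEq]
      constructor
      · rw [show (2 : ℝ) * π - θ (2 * s₂ - t) = -(θ (2 * s₂ - t)) + 2 * π by ring,
          Real.cos_add_two_pi, Real.cos_neg]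
        ring
      · rw [show (2 : ℝ) * π - θ (2 * s₂ - t) = -(θ (2 * s₂ - t)) + 2 * π by ring,
          Real.sin_add_two_pi, Real.sin_neg]
        ring
    rw [e]
    exact this
  have hsym2 : ∀ s, f s = g₂ s := by
    apply ode_uniq m n f g₂ hf hg₂ (fun t => hzpos t) (fun t => hzpos (2 * s₂ - t)) s₂
    simp only [hfdef, hg₂def]
    rw [show 2 * s₂ - s₂ = s₂ by ring, hθs₂, Prod.mk.injEq]
    constructor
    · ring
    · rfl
  -- extract component identities
  have hθ0s : ∀ s, θ s = -θ (-s) := fun s => congrArg Prod.fst (hsym0 s)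
  have hz0s : ∀ s, z s = z (-s) := fun s => congrArg Prod.snd (hsym0 s)
  have hθ2s : ∀ s, θ s = 2 * π - θ (2 * s₂ - s) := fun s => congrArg Prod.fst (hsym2 s)
  have hz2s : ∀ s, z s = z (2 * s₂ - s) := fun s => congrArg Prod.snd (hsym2 s)
  have hθper : ∀ s, θ (s + 2 * s₂) = θ s + 2 * π := by
    intro s
    have h1 := hθ2s (s + 2 * s₂)
    rw [show 2 * s₂ - (s + 2 * s₂) = -s by ring] at h1
    have h2 := hθ0s s
    rw [h1]
    rw [show θ s = -θ (-s) from h2]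
    ring
  have hzper : ∀ s, z (s + 2 * s₂) = z s := by
    intro s
    have h1 := hz2s (s + 2 * s₂)
    rw [show 2 * s₂ - (s + 2 * s₂) = -s by ring] at h1
    rw [h1, ← hz0s s]
  -- x part
  have hY : ∀ s, x (s + 2 * s₂) = x s + x (2 * s₂) := by
    have hshift : ∀ s, HasDerivAt (fun s => x (s + 2 * s₂)) (Real.cos (θ (s + 2 * s₂))) s := by
      intro s
      have hadd : HasDerivAt (fun u : ℝ => u + 2 * s₂) 1 s := (hasDerivAt_id s).add_const _
      have := (hx (s + 2 * s₂)).comp s hadd; rw [mul_one] at this; exact this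
    set Y : ℝ → ℝ := fun s => x (s + 2 * s₂) - x s with hYdef
    have hYd : ∀ s, HasDerivAt Y 0 s := by
      intro s
      have := (hshift s).sub (hx s)
      have e : Real.cos (θ (s + 2 * s₂)) - Real.cos (θ s) = 0 := by
        rw [hθper s, Real.cos_add_two_pi, sub_self]
      rwa [e] at this
    have hconst : ∀ s, Y s = Y 0 := by
      intro s
      exact is_const_of_deriv_eq_zero (fun u => (hYd u).differentiableAt)
        (fun u => (hYd u).deriv) s 0
    intro s
    have := hconst s
    simp only [hYdef, zero_add, hx0, sub_zero] at this
    linarith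
  intro s
  exact ⟨hY s, hzper s, hθper s⟩
end

section
/- Let θ, x, z solve x' = cos θ, z' = sin θ, z > 0, with (1 + b cos θ)·z·θ' + 2 cos θ − b sin²θ = 0, θ(0) = 0, z(0) = z₀, and b < −1. Then θ is strictly increasing, −π/2 < θ(s) < π/2, z is increasing for s > 0, the maximal positive existence time s̄ is finite, and θ'(s) → +∞ as s → s̄ with 1 + b cos θ(s) → 0; consequently the surface cannot be extended to a complete surface. -/
open Real Set Filter Topology

open scoped Classical

private lemma hasDerivAt_fst3 {f : ℝ → ℝ × ℝ × ℝ} {d : ℝ × ℝ × ℝ} {t : ℝ}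
    (h : HasDerivAt f d t) : HasDerivAt (fun u => (f u).1) d.1 t := by
  simpa using h.hasFDerivAt.fst.hasDerivAt

private lemma hasDerivAt_snd3 {f : ℝ → ℝ × ℝ × ℝ} {d : ℝ × ℝ × ℝ} {t : ℝ}
    (h : HasDerivAt f d t) : HasDerivAt (fun u => (f u).2) d.2 t := by
  simpa using h.hasFDerivAt.snd.hasDerivAt

private lemma hasDerivAt_snd_fst3 {f : ℝ → ℝ × ℝ × ℝ} {d : ℝ × ℝ × ℝ} {t : ℝ}
    (h : HasDerivAt f d t) : HasDerivAt (fun u => (f u).2.1) d.2.1 t := by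
  simpa using (hasDerivAt_snd3 h).hasFDerivAt.fst.hasDerivAt

private lemma hasDerivAt_snd_snd3 {f : ℝ → ℝ × ℝ × ℝ} {d : ℝ × ℝ × ℝ} {t : ℝ}
    (h : HasDerivAt f d t) : HasDerivAt (fun u => (f u).2.2) d.2.2 t := by
  simpa using (hasDerivAt_snd3 h).hasFDerivAt.snd.hasDerivAt


set_option maxHeartbeats 2000000

/-- Case `2H + bK = 0` with `b < -1`, `θ(0) = 0`: `θ` is strictly increasing
with `-π/2 < θ < π/2`, `z` is increasing for `s > 0`, the maximal positive
existence time `s̄` is finite, and `θ' → +∞` while `1 + b cos θ → 0` as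
`s → s̄`; consequently the surface cannot be extended to a complete one. -/
theorem stmt19 (b z₀ : ℝ) (θ x z θd : ℝ → ℝ) (I : Set ℝ)
    (hI : I.OrdConnected) (hIopen : IsOpen I) (hI0 : (0 : ℝ) ∈ I)
    (hx : ∀ s ∈ I, HasDerivAt x (Real.cos (θ s)) s)
    (hz : ∀ s ∈ I, HasDerivAt z (Real.sin (θ s)) s)
    (hθ : ∀ s ∈ I, HasDerivAt θ (θd s) s)
    (hzpos : ∀ s ∈ I, 0 < z s)
    (hW : ∀ s ∈ I, (1 + b * Real.cos (θ s)) * z s * θd s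
      + 2 * Real.cos (θ s) - b * Real.sin (θ s) ^ 2 = 0)
    (hθ0 : θ 0 = 0) (hz0 : z 0 = z₀) (hz₀ : 0 < z₀) (hb : b < -1)
    (hmax : ∀ (J : Set ℝ) (θ₂ x₂ z₂ θd₂ : ℝ → ℝ),
      J.OrdConnected → IsOpen J → I ⊆ J →
      (∀ s ∈ I, θ₂ s = θ s ∧ x₂ s = x s ∧ z₂ s = z s) →
      (∀ s ∈ J, HasDerivAt x₂ (Real.cos (θ₂ s)) s ∧
        HasDerivAt z₂ (Real.sin (θ₂ s)) s ∧ HasDerivAt θ₂ (θd₂ s) s ∧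
        0 < z₂ s ∧ (1 + b * Real.cos (θ₂ s)) * z₂ s * θd₂ s
          + 2 * Real.cos (θ₂ s) - b * Real.sin (θ₂ s) ^ 2 = 0) →
      J ⊆ I) :
    StrictMonoOn θ I ∧
    (∀ s ∈ I, -(π / 2) < θ s ∧ θ s < π / 2) ∧
    MonotoneOn z (I ∩ Ici 0) ∧
    ∃ sbar : ℝ, 0 < sbar ∧ IsLUB I sbar ∧
      Tendsto θd (𝓝[<] sbar) atTop ∧
      Tendsto (fun s => 1 + b * Real.cos (θ s)) (𝓝[<] sbar) (𝓝 0) := by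
  have hconv : Convex ℝ I := hI.convex
  have hθcont : ContinuousOn θ I := fun s hs => (hθ s hs).continuousAt.continuousWithinAt
  -- W never vanishes on I
  have hWne : ∀ s ∈ I, 1 + b * Real.cos (θ s) ≠ 0 := by
    intro s hs h0
    have h1 := hW s hs
    rw [h0] at h1
    have hpyth := Real.sin_sq_add_cos_sq (θ s)
    set c := Real.cos (θ s); set s2 := Real.sin (θ s) ^ 2
    nlinarith [sq_nonneg b, sq_nonneg (b - c), sq_nonneg (b*c)]
  -- W < 0 on I
  have hWneg : ∀ s ∈ I, 1 + b * Real.cos (θ s) < 0 := by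
    intro s hs
    rcases lt_or_ge (1 + b * Real.cos (θ s)) 0 with h | h
    · exact h
    · exfalso
      have hsub : uIcc (0:ℝ) s ⊆ I := by
        rw [uIcc_eq_union]
        exact union_subset (hI.out hI0 hs) (hI.out hs hI0)
      have hcont : ContinuousOn (fun t => 1 + b * Real.cos (θ t)) (uIcc 0 s) :=
        (continuous_const.add (continuous_const.mul Real.continuous_cos)).comp_continuousOn
          (hθcont.mono hsub)
      have h00 : (fun t => 1 + b * Real.cos (θ t)) 0 = 1 + b := by simp [hθ0]
      have hmem : (0:ℝ) ∈ uIcc ((fun t => 1 + b * Real.cos (θ t)) 0)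
          ((fun t => 1 + b * Real.cos (θ t)) s) := by
        rw [h00]
        rcases h.eq_or_lt' with h' | h'
        · exact h' ▸ right_mem_uIcc
        · exact mem_uIcc.2 (Or.inl ⟨by linarith, le_of_lt h'⟩)
      obtain ⟨t, ht, ht0⟩ := intermediate_value_uIcc hcont hmem
      exact hWne t (hsub ht) ht0
  -- cos θ > 0 on I
  have hcpos : ∀ s ∈ I, 0 < Real.cos (θ s) := by
    intro s hs
    by_contra h
    push_neg at h
    have : 0 ≤ b * Real.cos (θ s) := by nlinarith
    have := hWneg s hs
    linarith
  -- θ ∈ (-π/2, π/2)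
  have hθrange : ∀ s ∈ I, -(π/2) < θ s ∧ θ s < π/2 := by
    intro s hs
    have hsub : uIcc (0:ℝ) s ⊆ I := by
      rw [uIcc_eq_union]
      exact union_subset (hI.out hI0 hs) (hI.out hs hI0)
    have hcont := hθcont.mono hsub
    constructor
    · by_contra h
      push_neg at h
      have hmem : -(π/2) ∈ uIcc (θ 0) (θ s) := by
        rw [hθ0]; exact mem_uIcc.2 (Or.inr ⟨h, by linarith [Real.pi_pos]⟩)
      obtain ⟨t, ht, ht0⟩ := intermediate_value_uIcc hcont hmem
      have := hcpos t (hsub ht)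
      rw [ht0] at this
      simp [Real.cos_pi_div_two] at this
    · by_contra h
      push_neg at h
      have hmem : π/2 ∈ uIcc (θ 0) (θ s) := by
        rw [hθ0]; exact mem_uIcc.2 (Or.inl ⟨by positivity, h⟩)
      obtain ⟨t, ht, ht0⟩ := intermediate_value_uIcc hcont hmem
      have := hcpos t (hsub ht)
      rw [ht0, Real.cos_pi_div_two] at this
      exact lt_irrefl 0 this
  -- θd > 0 on I
  have hθdpos : ∀ s ∈ I, 0 < θd s := by
    intro s hs
    by_contra h
    push_neg at h
    have h2 : (1 + b * Real.cos (θ s)) * z s < 0 :=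
      mul_neg_of_neg_of_pos (hWneg s hs) (hzpos s hs)
    have h3 : 0 ≤ (1 + b * Real.cos (θ s)) * z s * θd s := by nlinarith
    have h4 : b * Real.sin (θ s) ^ 2 ≤ 0 :=
      mul_nonpos_of_nonpos_of_nonneg (by linarith) (sq_nonneg _)
    have h5 := hW s hs
    have h6 := hcpos s hs
    linarith
  -- θ strictly increasing
  have hmonoθ : StrictMonoOn θ I := by
    apply strictMonoOn_of_deriv_pos hconv hθcont
    intro t ht
    rw [hIopen.interior_eq] at ht
    rw [(hθ t ht).deriv]
    exact hθdpos t ht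
  -- θ ≥ 0 for s ≥ 0
  have hθnn : ∀ s ∈ I ∩ Ici 0, 0 ≤ θ s := by
    rintro s ⟨hs, hs0⟩
    rcases eq_or_lt_of_le (mem_Ici.1 hs0) with h | h
    · rw [← h, hθ0]
    · have := hmonoθ hI0 hs h
      rw [hθ0] at this
      exact this.le
  -- z monotone on I ∩ Ici 0
  have hDconv : Convex ℝ (I ∩ Ici 0) := hconv.inter (convex_Ici 0)
  have hzcont : ContinuousOn z I := fun s hs => (hz s hs).continuousAt.continuousWithinAt
  have hintD : interior (I ∩ Ici 0) ⊆ I ∩ Ici 0 := interior_subset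
  have hmonoz : MonotoneOn z (I ∩ Ici 0) := by
    apply monotoneOn_of_deriv_nonneg hDconv (hzcont.mono inter_subset_left)
    · intro t ht
      exact ((hz t (hintD ht).1).differentiableAt).differentiableWithinAt
    · intro t ht
      rw [(hz t (hintD ht).1).deriv]
      exact Real.sin_nonneg_of_nonneg_of_le_pi (hθnn t (hintD ht))
        (by linarith [(hθrange t (hintD ht).1).2, Real.pi_pos])
  -- z s ≤ z₀ + s for s ∈ I ∩ Ici 0
  have hzle : ∀ s ∈ I ∩ Ici 0, z s ≤ z₀ + s := by
    have hanti : AntitoneOn (fun s => z s - s) (I ∩ Ici 0) := by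
      apply antitoneOn_of_deriv_nonpos hDconv
      · exact ((hzcont.mono inter_subset_left).sub continuousOn_id)
      · intro t ht
        exact (((hz t (hintD ht).1).sub (hasDerivAt_id' (x := t))).differentiableAt).differentiableWithinAt
      · intro t ht
        rw [HasDerivAt.deriv (f := fun s => z s - s) ((hz t (hintD ht).1).sub (hasDerivAt_id' (x := t)))]
        linarith [Real.sin_le_one (θ t)]
    intro s hs
    have := hanti ⟨hI0, self_mem_Ici⟩ hs (mem_Ici.1 hs.2)
    simp only [sub_zero] at this
    rw [hz0] at this
    linarith
  have hzge : ∀ s ∈ I ∩ Ici 0, z₀ ≤ z s := by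
    intro s hs
    have := hmonoz ⟨hI0, self_mem_Ici⟩ hs (mem_Ici.1 hs.2)
    rw [hz0] at this
    exact this
  -- lower bound for θd
  set c : ℝ := 2 / (b * (1 + b)) with hc_def
  have hP : 0 < b * (1 + b) := mul_pos_of_neg_of_neg (by linarith) (by linarith)
  have hc : 0 < c := div_pos two_pos hP
  have hθdlow : ∀ s ∈ I ∩ Ici 0, c / (z₀ + s) ≤ θd s := by
    rintro s ⟨hs, hs0⟩
    have hzs := hzpos s hs
    have hzle' := hzle s ⟨hs, hs0⟩
    have hzP : (0:ℝ) < z₀ + s := by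
      have := mem_Ici.1 hs0; linarith
    rw [div_le_iff₀ hzP, hc_def, div_le_iff₀ hP]
    have heq := hW s hs
    have hWs := hWneg s hs
    have hcs := Real.cos_le_one (θ s)
    have hsq := sq_nonneg (Real.sin (θ s))
    have hθds := hθdpos s hs
    -- b * cos θ < -1,  A := -(1+b cos θ) ∈ (0, -(1+b)],  A z θd = 2cos - b sin², b*N ≤ -2
    nlinarith [mul_le_mul_of_nonneg_left hzle' hθds.le,
      mul_le_mul (le_refl (-(1+b))) hzle' hzs.le (by linarith : (0:ℝ) ≤ -(1+b)),
      mul_pos hθds hzs,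
      mul_le_mul_of_nonneg_right
        (by nlinarith : -(1 + b * Real.cos (θ s)) ≤ -(1+b))
        (mul_nonneg hzs.le hθds.le)]
  -- g = θ - c log (z₀ + ·) is monotone on I ∩ Ici 0
  have hlogd : ∀ t : ℝ, 0 ≤ t →
      HasDerivAt (fun s => Real.log (z₀ + s)) ((z₀ + t)⁻¹) t := by
    intro t ht
    have h1 : HasDerivAt (fun s : ℝ => z₀ + s) 1 t := (hasDerivAt_id' (x := t)).const_add z₀
    have h2 := (Real.hasDerivAt_log (by linarith : z₀ + t ≠ 0)).comp t h1
    simpa [Function.comp_def] using h2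
  have hgmono : MonotoneOn (fun s => θ s - c * Real.log (z₀ + s)) (I ∩ Ici 0) := by
    apply monotoneOn_of_deriv_nonneg hDconv
    · apply ContinuousOn.sub (hθcont.mono inter_subset_left)
      intro t ht
      exact ((hlogd t ht.2).continuousAt.continuousWithinAt).const_smul c |>.congr
        (fun y _ => by simp [smul_eq_mul]) (by simp [smul_eq_mul])
    · intro t ht
      have ht' := hintD ht
      exact (((hθ t ht'.1).sub ((hlogd t ht'.2).const_mul c)).differentiableAt).differentiableWithinAt
    · intro t ht
      have ht' := hintD ht
      rw [HasDerivAt.deriv (f := fun s => θ s - c * Real.log (z₀ + s)) ((hθ t ht'.1).sub ((hlogd t ht'.2).const_mul c))]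
      have := hθdlow t ht'
      have hzP : (0:ℝ) < z₀ + t := by have := ht'.2; simp at this; linarith
      have : c / (z₀ + t) = c * (z₀ + t)⁻¹ := div_eq_mul_inv c _
      linarith [hθdlow t ht', (div_eq_mul_inv c (z₀ + t)) ▸ hθdlow t ht']
  -- boundedness of I
  set Bnd : ℝ := z₀ * Real.exp (π / 2 / c) with hB_def
  have hsB : ∀ s ∈ I ∩ Ici 0, s < Bnd := by
    rintro s ⟨hs, hs0⟩
    have h1 := hgmono ⟨hI0, self_mem_Ici⟩ ⟨hs, hs0⟩ (mem_Ici.1 hs0)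
    simp only [hθ0, add_zero] at h1
    have h2 := (hθrange s hs).2
    have hzP : (0:ℝ) < z₀ + s := by have := mem_Ici.1 hs0; linarith
    -- c * (log (z₀+s) - log z₀) ≤ θ s < π/2
    have h3 : c * (Real.log (z₀ + s) - Real.log z₀) < π / 2 := by nlinarith
    have h4 : Real.log (z₀ + s) - Real.log z₀ < π / 2 / c := by
      rw [lt_div_iff₀ hc]; nlinarith
    have h5 : Real.log (z₀ + s) < π / 2 / c + Real.log z₀ := by linarith
    have h6 : z₀ + s < Real.exp (π / 2 / c + Real.log z₀) := by
      calc z₀ + s = Real.exp (Real.log (z₀ + s)) := (Real.exp_log hzP).symm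
      _ < Real.exp (π / 2 / c + Real.log z₀) := Real.exp_lt_exp.2 h5
    rw [Real.exp_add, Real.exp_log hz₀] at h6
    rw [hB_def]
    nlinarith
  have hbdd : BddAbove I := by
    refine ⟨max Bnd 0, fun s hs => ?_⟩
    rcases le_or_gt 0 s with h | h
    · exact le_max_of_le_left (hsB s ⟨hs, h⟩).le
    · exact le_max_of_le_right h.le
  set sbar : ℝ := sSup I with hsbar_def
  have hlub : IsLUB I sbar := isLUB_csSup ⟨0, hI0⟩ hbdd
  have hsbar_pos : 0 < sbar := by
    obtain ⟨ε, hε, hball⟩ := Metric.isOpen_iff.mp hIopen 0 hI0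
    have : ε / 2 ∈ I := hball (by
      rw [Metric.mem_ball, Real.dist_eq, sub_zero, abs_of_pos (half_pos hε)]; linarith)
    have := hlub.1 this
    linarith
  have hsub01 : Ioo 0 sbar ⊆ I := by
    intro t ht
    obtain ⟨u, hu, htu, -⟩ := hlub.exists_between ht.2
    exact hI.out hI0 hu ⟨ht.1.le, htu.le⟩
  have hsbar_not : sbar ∉ I := by
    intro hmem
    obtain ⟨ε, hε, hball⟩ := Metric.isOpen_iff.mp hIopen sbar hmem
    have : sbar + ε / 2 ∈ I := hball (by
      rw [Metric.mem_ball, Real.dist_eq, add_sub_cancel_left, abs_of_pos (half_pos hε)]; linarith)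
    have := hlub.1 this
    linarith
  -- limits at sbar
  have hKsub : Ioo (0:ℝ) sbar ⊆ I := hsub01
  have hKD : Ioo (0:ℝ) sbar ⊆ I ∩ Ici 0 := fun t ht => ⟨hsub01 ht, ht.1.le⟩
  have hKne : (Ioo (0:ℝ) sbar).Nonempty := ⟨sbar/2, by constructor <;> linarith⟩
  -- θ limit
  have hmθK : MonotoneOn θ (Ioo 0 sbar) := (hmonoθ.monotoneOn).mono hKsub
  have hbθ : BddAbove (θ '' Ioo 0 sbar) := by
    refine ⟨π/2, ?_⟩
    rintro y ⟨t, ht, rfl⟩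
    exact (hθrange t (hKsub ht)).2.le
  set θbar : ℝ := sSup (θ '' Ioo 0 sbar) with hθbar_def
  have htendθ : Tendsto θ (𝓝[<] sbar) (𝓝 θbar) :=
    MonotoneOn.tendsto_nhdsWithin_Ioo_left hKne hmθK hbθ
  have hθbar_ub : ∀ t ∈ Ioo (0:ℝ) sbar, θ t ≤ θbar :=
    fun t ht => le_csSup hbθ (mem_image_of_mem θ ht)
  have hθbar_le : θbar ≤ π/2 := by
    apply csSup_le (hKne.image θ)
    rintro y ⟨t, ht, rfl⟩
    exact (hθrange t (hKsub ht)).2.le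
  have hθbar_nn : 0 ≤ θbar := by
    obtain ⟨t, ht⟩ := hKne
    exact le_trans (hθnn t (hKD ht)) (hθbar_ub t ht)
  -- z limit
  have hmzK : MonotoneOn z (Ioo 0 sbar) := hmonoz.mono hKD
  have hbz : BddAbove (z '' Ioo 0 sbar) := by
    refine ⟨z₀ + sbar, ?_⟩
    rintro y ⟨t, ht, rfl⟩
    have := hzle t (hKD ht)
    linarith [ht.2]
  set zbar : ℝ := sSup (z '' Ioo 0 sbar) with hzbar_def
  have htendz : Tendsto z (𝓝[<] sbar) (𝓝 zbar) :=
    MonotoneOn.tendsto_nhdsWithin_Ioo_left hKne hmzK hbz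
  have hzbar_pos : 0 < zbar := by
    obtain ⟨t, ht⟩ := hKne
    have := hzge t (hKD ht)
    have := le_csSup hbz (mem_image_of_mem z ht)
    linarith
  -- x limit
  have hxcont : ContinuousOn x I := fun s hs => (hx s hs).continuousAt.continuousWithinAt
  have hmxK : MonotoneOn x (Ioo 0 sbar) := by
    have : MonotoneOn x I := by
      apply monotoneOn_of_deriv_nonneg hconv hxcont
      · intro t ht
        rw [hIopen.interior_eq] at ht
        exact ((hx t ht).differentiableAt).differentiableWithinAt
      · intro t ht
        rw [hIopen.interior_eq] at ht
        rw [(hx t ht).deriv]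
        exact (hcpos t ht).le
    exact this.mono hKsub
  have hbx : BddAbove (x '' Ioo 0 sbar) := by
    have hanti : AntitoneOn (fun s => x s - s) I := by
      apply antitoneOn_of_deriv_nonpos hconv
        (fun t ht => ((hx t ht).sub (hasDerivAt_id' (x := t))).continuousAt.continuousWithinAt)
      · intro t ht
        rw [hIopen.interior_eq] at ht
        exact (((hx t ht).sub (hasDerivAt_id' (x := t))).differentiableAt).differentiableWithinAt
      · intro t ht
        rw [hIopen.interior_eq] at ht
        rw [((hx t ht).sub (hasDerivAt_id' (x := t))).deriv]
        linarith [Real.cos_le_one (θ t)]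
    refine ⟨x 0 + sbar, ?_⟩
    rintro y ⟨t, ht, rfl⟩
    have := hanti hI0 (hKsub ht) ht.1.le
    simp only [sub_zero] at this
    linarith [ht.2]
  set xbar : ℝ := sSup (x '' Ioo 0 sbar) with hxbar_def
  have htendx : Tendsto x (𝓝[<] sbar) (𝓝 xbar) :=
    MonotoneOn.tendsto_nhdsWithin_Ioo_left hKne hmxK hbx
  -- Wbar
  have htendW : Tendsto (fun s => 1 + b * Real.cos (θ s)) (𝓝[<] sbar)
      (𝓝 (1 + b * Real.cos θbar)) := by
    have hcont : Continuous fun y : ℝ => 1 + b * Real.cos y :=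
      continuous_const.add (continuous_const.mul Real.continuous_cos)
    exact (hcont.continuousAt).tendsto.comp htendθ
  have hWbar_le : 1 + b * Real.cos θbar ≤ 0 := by
    have hev : ∀ᶠ s in 𝓝[<] sbar, 1 + b * Real.cos (θ s) ≤ 0 := by
      filter_upwards [Ioo_mem_nhdsLT_of_mem (b := sbar)
        ⟨hsbar_pos, le_refl sbar⟩] with t ht
      exact (hWneg t (hKsub ht)).le
    exact le_of_tendsto htendW hev
  -- the key claim: W → 0
  have hW0 : 1 + b * Real.cos θbar = 0 := by
    by_contra h0
    have hWbar_lt : 1 + b * Real.cos θbar < 0 := lt_of_le_of_ne hWbar_le h0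
    set pbar : ℝ × ℝ × ℝ := (θbar, xbar, zbar) with hpbar_def
    set v : ℝ × ℝ × ℝ → ℝ × ℝ × ℝ := fun p =>
      ((b * Real.sin p.1 ^ 2 - 2 * Real.cos p.1) / ((1 + b * Real.cos p.1) * p.2.2),
        Real.cos p.1, Real.sin p.1) with hv_def
    have hden : (1 + b * Real.cos θbar) * zbar ≠ 0 :=
      ne_of_lt (mul_neg_of_neg_of_pos hWbar_lt hzbar_pos)
    -- smoothness of the vector field at pbar
    have hsinC : ContDiff ℝ 1 (fun p : ℝ × ℝ × ℝ => Real.sin p.1) :=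
      (Real.contDiff_sin.of_le le_top).comp contDiff_fst
    have hcosC : ContDiff ℝ 1 (fun p : ℝ × ℝ × ℝ => Real.cos p.1) :=
      (Real.contDiff_cos.of_le le_top).comp contDiff_fst
    have hz2C : ContDiff ℝ 1 (fun p : ℝ × ℝ × ℝ => p.2.2) :=
      contDiff_snd.comp contDiff_snd
    have hvC : ContDiffAt ℝ 1 v pbar := by
      apply ContDiffAt.prodMk
      · apply ContDiffAt.div
        · exact ((contDiff_const.mul (hsinC.pow 2)).sub
            (contDiff_const.mul hcosC)).contDiffAt
        · exact ((contDiff_const.add (contDiff_const.mul hcosC)).mul hz2C).contDiffAt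
        · exact hden
      · exact (hcosC.contDiffAt).prodMk (hsinC.contDiffAt)
    obtain ⟨f, hf0, ε, hε, hfd⟩ := hvC.exists_forall_mem_closedBall_exists_eq_forall_mem_Ioo_hasDerivAt₀ sbar
    obtain ⟨Lk, sset, hsset, hlip⟩ := hvC.exists_lipschitzOnWith
    obtain ⟨r, hr, hballss⟩ := Metric.mem_nhds_iff.mp hsset
    set U : Set (ℝ × ℝ × ℝ) :=
      {p | 1 + b * Real.cos p.1 < 0 ∧ 0 < p.2.2} ∩ Metric.ball pbar r with hU_def
    have hUopen : IsOpen U := by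
      apply IsOpen.inter _ Metric.isOpen_ball
      apply IsOpen.inter
      · exact isOpen_lt (continuous_const.add (continuous_const.mul
          (Real.continuous_cos.comp continuous_fst))) continuous_const
      · exact isOpen_lt continuous_const (continuous_snd.comp continuous_snd)
    have hpbarU : pbar ∈ U := ⟨⟨hWbar_lt, hzbar_pos⟩, Metric.mem_ball_self hr⟩
    have hfc : ContinuousAt f sbar :=
      (hfd sbar ⟨by linarith, by linarith⟩).continuousAt
    have hevf : ∀ᶠ t in 𝓝 sbar, f t ∈ U := by
      apply hfc.eventually_mem (hUopen.mem_nhds _)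
      rw [hf0]; exact hpbarU
    obtain ⟨δ, hδ, hδev⟩ := Metric.eventually_nhds_iff.mp hevf
    -- the glued left solution
    set y : ℝ → ℝ × ℝ × ℝ := fun t => if t < sbar then (θ t, x t, z t) else pbar with hy_def
    have hysbar : y sbar = pbar := if_neg (lt_irrefl sbar)
    have htendy : Tendsto y (𝓝[<] sbar) (𝓝 pbar) := by
      apply Tendsto.congr' _ ((htendθ.prodMk_nhds (htendx.prodMk_nhds htendz)))
      filter_upwards [eventually_mem_nhdsWithin] with t (ht : t ∈ Iio sbar)
      exact (if_pos ht).symm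
    obtain ⟨a₁, ha₁, ha₁sub⟩ := mem_nhdsLT_iff_exists_Ioo_subset.mp
      (htendy.eventually (Metric.ball_mem_nhds pbar hr) :
        {t | y t ∈ Metric.ball pbar r} ∈ 𝓝[<] sbar)
    set ε₂ : ℝ := min δ ε with hε₂_def
    have hε₂ : 0 < ε₂ := lt_min hδ hε
    set a : ℝ := max (max (sbar - ε₂ / 2) (sbar / 2)) a₁ with ha_def
    have ha_lt : a < sbar := by
      apply max_lt (max_lt _ _) ha₁ <;> linarith
    have ha_pos : 0 < a := lt_of_lt_of_le (by linarith) (le_max_of_le_left (le_max_right _ _))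
    have ha_ge : sbar - ε₂ / 2 ≤ a := le_max_of_le_left (le_max_left _ _)
    have ha_ge1 : a₁ ≤ a := le_max_right _ _
    have hIoosubI : Ioo a sbar ⊆ I := fun t ht => hsub01 ⟨lt_trans ha_pos ht.1, ht.2⟩
    have hfU : ∀ t ∈ Ioo a (sbar + ε₂), f t ∈ U := by
      intro t ht
      apply hδev
      rw [Real.dist_eq, abs_sub_lt_iff]
      constructor
      · have : t < sbar + ε₂ := ht.2
        have : ε₂ ≤ δ := min_le_left _ _
        linarith
      · have : a < t := ht.1
        have : ε₂ ≤ δ := min_le_left _ _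
        linarith
    have hyball : ∀ t ∈ Ioo a sbar, y t ∈ Metric.ball pbar r :=
      fun t ht => ha₁sub ⟨lt_of_le_of_lt ha_ge1 ht.1, ht.2⟩
    -- y solves the ODE on Ioo 0 sbar
    have hyd : ∀ t ∈ Ioo (0:ℝ) sbar, HasDerivAt y (v (y t)) t := by
      intro t ht
      have htI := hsub01 ht
      have hevy : y =ᶠ[𝓝 t] fun u => (θ u, x u, z u) := by
        filter_upwards [Iio_mem_nhds ht.2] with u (hu : u < sbar)
        exact if_pos hu
      have hd : HasDerivAt (fun u => (θ u, x u, z u))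
          (θd t, Real.cos (θ t), Real.sin (θ t)) t :=
        (hθ t htI).prodMk ((hx t htI).prodMk (hz t htI))
      have hyval : y t = (θ t, x t, z t) := if_pos ht.2
      have hval : v (y t) = (θd t, Real.cos (θ t), Real.sin (θ t)) := by
        rw [hyval, hv_def]
        have hne : (1 + b * Real.cos (θ t)) * z t ≠ 0 :=
          ne_of_lt (mul_neg_of_neg_of_pos (hWneg t htI) (hzpos t htI))
        simp only
        congr 1
        rw [div_eq_iff hne]
        linear_combination (-1 : ℝ) * (hW t htI)
      rw [hval]
      exact hd.congr_of_eventuallyEq hevy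
    -- continuity of y on Icc a sbar
    have hIicTend : Tendsto y (𝓝[Iic sbar] sbar) (𝓝 pbar) := by
      rw [← Iio_union_right, nhdsWithin_union, nhdsWithin_singleton, tendsto_sup]
      refine ⟨htendy, tendsto_pure_left.mpr fun s hs => ?_⟩
      rw [hysbar]; exact mem_of_mem_nhds hs
    have hycont : ContinuousOn y (Icc a sbar) := by
      intro t ht
      rcases lt_or_eq_of_le ht.2 with h | h
      · exact (hyd t ⟨lt_of_lt_of_le ha_pos ht.1, h⟩).continuousAt.continuousWithinAt
      · subst h
        have h2 : Tendsto y (𝓝[Icc a sbar] sbar) (𝓝 pbar) :=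
          hIicTend.mono_left (nhdsWithin_mono _ Icc_subset_Iic_self)
        show Tendsto y (𝓝[Icc a sbar] sbar) (𝓝 (y sbar))
        rw [hysbar]; exact h2
    -- y has the one-sided derivative on Ioc a sbar
    have hyderiv : ∀ t ∈ Ioc a sbar, HasDerivWithinAt y (v (y t)) (Iic t) t := by
      intro t ht
      rcases lt_or_eq_of_le ht.2 with h | h
      · exact (hyd t ⟨lt_trans ha_pos ht.1, h⟩).hasDerivWithinAt
      · subst h
        have hdw : HasDerivWithinAt y (v pbar) (Iic sbar) sbar := by
          apply hasDerivWithinAt_Iic_of_tendsto_deriv (s := Ioo a sbar)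
          · intro u hu
            exact (hyd u ⟨lt_trans ha_pos hu.1, hu.2⟩).differentiableAt.differentiableWithinAt
          · have h2 : Tendsto y (𝓝[Ioo a sbar] sbar) (𝓝 pbar) :=
              htendy.mono_left (nhdsWithin_mono _ Ioo_subset_Iio_self)
            show Tendsto y (𝓝[Ioo a sbar] sbar) (𝓝 (y sbar))
            rw [hysbar]; exact h2
          · exact Ioo_mem_nhdsLT_of_mem ⟨ha_lt, le_refl sbar⟩
          · have hvcont : ContinuousAt v pbar := hvC.continuousAt
            have h3 : Tendsto (fun u => v (y u)) (𝓝[<] sbar) (𝓝 (v pbar)) :=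
              hvcont.tendsto.comp htendy
            apply Tendsto.congr' _ h3
            filter_upwards [Ioo_mem_nhdsLT_of_mem (b := sbar) ⟨ha_lt, le_refl sbar⟩] with u hu
            exact ((hyd u ⟨lt_trans ha_pos hu.1, hu.2⟩).deriv).symm
        rw [hysbar]
        exact hdw
    -- membership of y and f in the Lipschitz set
    have hymem : ∀ t ∈ Ioc a sbar, y t ∈ sset := by
      intro t ht
      rcases lt_or_eq_of_le ht.2 with h | h
      · exact hballss (hyball t ⟨ht.1, h⟩)
      · subst h; rw [hysbar]; exact hballss (Metric.mem_ball_self hr)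
    have hIccIoo : Icc a sbar ⊆ Ioo (sbar - ε) (sbar + ε) := by
      intro t ht
      have hε₂ε : ε₂ ≤ ε := min_le_right _ _
      constructor
      · have := ht.1; linarith [ha_ge]
      · have := ht.2; linarith
    have hfcont : ContinuousOn f (Icc a sbar) :=
      fun t ht => (hfd t (hIccIoo ht)).continuousAt.continuousWithinAt
    have hfderiv : ∀ t ∈ Ioc a sbar, HasDerivWithinAt f (v (f t)) (Iic t) t :=
      fun t ht => (hfd t (hIccIoo ⟨ht.1.le, ht.2⟩)).hasDerivWithinAt
    have hfmem : ∀ t ∈ Ioc a sbar, f t ∈ sset := by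
      intro t ht
      have : t ∈ Ioo a (sbar + ε₂) := ⟨ht.1, by linarith [ht.2, hε₂]⟩
      exact hballss (hfU t this).2
    have hbeq : y sbar = f sbar := by rw [hysbar, hf0]
    have huniq : EqOn y f (Icc a sbar) :=
      ODE_solution_unique_of_mem_Icc_left (fun _ _ => hlip) hycont hyderiv hymem
        hfcont hfderiv hfmem hbeq
    -- build the extension
    set θ₂ : ℝ → ℝ := fun t => if t ∈ I then θ t else (f t).1 with hθ₂_def
    set x₂ : ℝ → ℝ := fun t => if t ∈ I then x t else (f t).2.1 with hx₂_def
    set z₂ : ℝ → ℝ := fun t => if t ∈ I then z t else (f t).2.2 with hz₂_def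
    set θd₂ : ℝ → ℝ := fun t => if t ∈ I then θd t else (v (f t)).1 with hθd₂_def
    set J : Set ℝ := I ∪ Ioo a (sbar + ε₂) with hJ_def
    have hagreeO : ∀ t ∈ Ioo a (sbar + ε₂),
        θ₂ t = (f t).1 ∧ x₂ t = (f t).2.1 ∧ z₂ t = (f t).2.2 := by
      intro t ht
      by_cases htI : t ∈ I
      · have htlt : t < sbar := lt_of_le_of_ne (hlub.1 htI) (fun h => hsbar_not (h ▸ htI))
        have h1 : y t = f t := huniq ⟨ht.1.le, htlt.le⟩
        have h2 : y t = (θ t, x t, z t) := if_pos htlt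
        rw [h2] at h1
        refine ⟨?_, ?_, ?_⟩ <;> simp only [hθ₂_def, hx₂_def, hz₂_def, if_pos htI, ← h1]
      · refine ⟨?_, ?_, ?_⟩ <;> simp only [hθ₂_def, hx₂_def, hz₂_def, if_neg htI]
    have hw_mid : (a + sbar) / 2 ∈ I := hIoosubI ⟨by linarith, by linarith⟩
    have hw_midO : (a + sbar) / 2 ∈ Ioo a (sbar + ε₂) := ⟨by linarith, by linarith⟩
    have hJord : J.OrdConnected := by
      constructor
      rintro p hp q hq t ⟨htp, htq⟩
      rcases le_or_gt t ((a + sbar) / 2) with h | h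
      · rcases hp with hpI | hpO
        · exact Or.inl (hI.out hpI hw_mid ⟨htp, h⟩)
        · exact Or.inr ⟨lt_of_lt_of_le hpO.1 htp, lt_of_le_of_lt h hw_midO.2⟩
      · rcases hq with hqI | hqO
        · exact Or.inl (hI.out hw_mid hqI ⟨h.le, htq⟩)
        · exact Or.inr ⟨lt_of_le_of_lt hw_midO.1.le h, lt_of_le_of_lt htq hqO.2⟩
    have hJopen : IsOpen J := hIopen.union isOpen_Ioo
    have hagreeI : ∀ s ∈ I, θ₂ s = θ s ∧ x₂ s = x s ∧ z₂ s = z s := by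
      intro s hs
      refine ⟨?_, ?_, ?_⟩ <;> simp only [hθ₂_def, hx₂_def, hz₂_def, if_pos hs]
    have hsol : ∀ s ∈ J, HasDerivAt x₂ (Real.cos (θ₂ s)) s ∧
        HasDerivAt z₂ (Real.sin (θ₂ s)) s ∧ HasDerivAt θ₂ (θd₂ s) s ∧
        0 < z₂ s ∧ (1 + b * Real.cos (θ₂ s)) * z₂ s * θd₂ s
          + 2 * Real.cos (θ₂ s) - b * Real.sin (θ₂ s) ^ 2 = 0 := by
      intro t htJ
      by_cases htI : t ∈ I
      · have hevθ : θ₂ =ᶠ[𝓝 t] θ := by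
          filter_upwards [hIopen.mem_nhds htI] with u hu
          simp only [hθ₂_def, if_pos hu]
        have hevx : x₂ =ᶠ[𝓝 t] x := by
          filter_upwards [hIopen.mem_nhds htI] with u hu
          simp only [hx₂_def, if_pos hu]
        have hevz : z₂ =ᶠ[𝓝 t] z := by
          filter_upwards [hIopen.mem_nhds htI] with u hu
          simp only [hz₂_def, if_pos hu]
        have hvals := hagreeI t htI
        refine ⟨?_, ?_, ?_, ?_, ?_⟩
        · rw [hvals.1]
          exact (hx t htI).congr_of_eventuallyEq hevx
        · rw [hvals.1]
          exact (hz t htI).congr_of_eventuallyEq hevz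
        · have : θd₂ t = θd t := by simp only [hθd₂_def, if_pos htI]
          rw [this]
          exact (hθ t htI).congr_of_eventuallyEq hevθ
        · rw [hvals.2.2]; exact hzpos t htI
        · rw [hvals.1, hvals.2.2]
          have : θd₂ t = θd t := by simp only [hθd₂_def, if_pos htI]
          rw [this]
          exact hW t htI
      · have htO : t ∈ Ioo a (sbar + ε₂) := htJ.resolve_left htI
        have htε : t ∈ Ioo (sbar - ε) (sbar + ε) := by
          have hε₂ε : ε₂ ≤ ε := min_le_right _ _
          constructor
          · have := htO.1; linarith [ha_ge]
          · have := htO.2; linarith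
        have hft := hfd t htε
        have hevθ : θ₂ =ᶠ[𝓝 t] fun u => (f u).1 := by
          filter_upwards [isOpen_Ioo.mem_nhds htO] with u hu
          exact (hagreeO u hu).1
        have hevx : x₂ =ᶠ[𝓝 t] fun u => (f u).2.1 := by
          filter_upwards [isOpen_Ioo.mem_nhds htO] with u hu
          exact (hagreeO u hu).2.1
        have hevz : z₂ =ᶠ[𝓝 t] fun u => (f u).2.2 := by
          filter_upwards [isOpen_Ioo.mem_nhds htO] with u hu
          exact (hagreeO u hu).2.2
        have hvals := hagreeO t htO
        have hfUt := hfU t htO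
        have hWf : 1 + b * Real.cos ((f t).1) < 0 := hfUt.1.1
        have hzf : 0 < (f t).2.2 := hfUt.1.2
        have hv1 : (v (f t)).1 = (b * Real.sin ((f t).1) ^ 2 - 2 * Real.cos ((f t).1)) /
            ((1 + b * Real.cos ((f t).1)) * (f t).2.2) := by rw [hv_def]
        have hv2 : (v (f t)).2.1 = Real.cos ((f t).1) := by rw [hv_def]
        have hv3 : (v (f t)).2.2 = Real.sin ((f t).1) := by rw [hv_def]
        refine ⟨?_, ?_, ?_, ?_, ?_⟩
        · rw [hvals.1]
          have := hasDerivAt_snd_fst3 hft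
          rw [hv2] at this
          exact this.congr_of_eventuallyEq hevx
        · rw [hvals.1]
          have := hasDerivAt_snd_snd3 hft
          rw [hv3] at this
          exact this.congr_of_eventuallyEq hevz
        · have hθdv : θd₂ t = (v (f t)).1 := by simp only [hθd₂_def, if_neg htI]
          rw [hθdv]
          exact (hasDerivAt_fst3 hft).congr_of_eventuallyEq hevθ
        · rw [hvals.2.2]; exact hzf
        · have hθdv : θd₂ t = (v (f t)).1 := by simp only [hθd₂_def, if_neg htI]
          rw [hvals.1, hvals.2.2, hθdv, hv1]
          have hne : (1 + b * Real.cos ((f t).1)) * (f t).2.2 ≠ 0 :=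
            ne_of_lt (mul_neg_of_neg_of_pos hWf hzf)
          have h7 : (1 + b * Real.cos ((f t).1)) * (f t).2.2 * ((b * Real.sin ((f t).1) ^ 2 - 2 * Real.cos ((f t).1)) / ((1 + b * Real.cos ((f t).1)) * (f t).2.2)) = b * Real.sin ((f t).1) ^ 2 - 2 * Real.cos ((f t).1) := by
            rw [mul_div_assoc', mul_div_cancel_left₀ _ hne]
          linarith
    have hJsub : J ⊆ I := hmax J θ₂ x₂ z₂ θd₂ hJord hJopen subset_union_left hagreeI hsol
    exact hsbar_not (hJsub (Or.inr ⟨ha_lt, by linarith⟩))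
  -- conclusions
  have htendW0 : Tendsto (fun s => 1 + b * Real.cos (θ s)) (𝓝[<] sbar) (𝓝 0) := by
    rw [← hW0]; exact htendW
  set C : ℝ := (-2/b) / (z₀ + sbar) with hC_def
  have hzsP : (0:ℝ) < z₀ + sbar := by linarith
  have hC : 0 < C := by
    apply div_pos _ hzsP
    rw [div_pos_iff]
    right; constructor <;> linarith
  have hlow : ∀ᶠ s in 𝓝[<] sbar, C / (-(1 + b * Real.cos (θ s))) ≤ θd s := by
    filter_upwards [Ioo_mem_nhdsLT_of_mem (b := sbar) ⟨hsbar_pos, le_refl sbar⟩] with t ht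
    have htI := hKsub ht
    have hA : 0 < -(1 + b * Real.cos (θ t)) := by linarith [hWneg t htI]
    rw [div_le_iff₀ hA, hC_def, div_le_iff₀ hzsP,
      div_le_iff_of_neg (by linarith : b < (0:ℝ))]
    have heq := hW t htI
    have hzles : z t ≤ z₀ + sbar := by
      have := hzle t (hKD ht); linarith [ht.2]
    have hzt := hzpos t htI
    have hθdt := hθdpos t htI
    have hsq := sq_nonneg (Real.sin (θ t))
    have hWt := hWneg t htI
    nlinarith [mul_pos hθdt hA,
      mul_le_mul_of_nonneg_left hzles (mul_pos hθdt hA).le]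
  have htendθd : Tendsto θd (𝓝[<] sbar) atTop := by
    have h1 : Tendsto (fun s => -(1 + b * Real.cos (θ s))) (𝓝[<] sbar) (𝓝[>] 0) := by
      rw [tendsto_nhdsWithin_iff]
      constructor
      · simpa using htendW0.neg
      · filter_upwards [Ioo_mem_nhdsLT_of_mem (b := sbar) ⟨hsbar_pos, le_refl sbar⟩] with t ht
        exact mem_Ioi.2 (by linarith [hWneg t (hKsub ht)])
    have h2 : Tendsto (fun s => (-(1 + b * Real.cos (θ s)))⁻¹) (𝓝[<] sbar) atTop :=
      tendsto_inv_nhdsGT_zero.comp h1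
    have h3 : Tendsto (fun s => C * (-(1 + b * Real.cos (θ s)))⁻¹) (𝓝[<] sbar) atTop :=
      h2.const_mul_atTop hC
    apply tendsto_atTop_mono' _ _ h3
    filter_upwards [hlow] with t ht
    rw [← div_eq_mul_inv]
    exact ht
  exact ⟨hmonoθ, hθrange, hmonoz, sbar, hsbar_pos, hlub, htendθd, htendW0⟩
end
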